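/- (Equilibrium spot emission allowances.) Suppose real numbers P and q_1,…,q_n satisfy the inverse demand equation P = γ̂ − β Σ_i (q_i + q_i^F) and q_i = τ_i (P − b_i − c_i q_i^F − η_i P^{CO2}) for every i, and for each generator i with futures emission commitment ε_i^F define its spot emission trading as ε_i^S := η_i Σ_k (q_k + q_k^F) − ε_i^F. Then for every i, ε_i^S = η_i Σ_k q_k^F + η_i Σ_k τ_k φ [ γ̂ + β Σ_l τ_l (b_l + c_l q_l^F + η_l P^{CO2}) ] − η_i (Σ_k τ_k) φ β Σ_k q_k^F − η_i Σ_k τ_k (b_k + c_k q_k^F + η_k P^{CO2}) − ε_i^F. -/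

import Mathlib

/-- `tau β δ c i = 1 / (β (1 + δ_i) + c_i)`. -/
noncomputable def tau {n : ℕ} (β : ℝ) (δ c : Fin n → ℝ) (i : Fin n) : ℝ :=
  1 / (β * (1 + δ i) + c i)

/-- `phi β δ c = 1 / (1 + β Σ_i τ_i)`. -/
noncomputable def phi {n : ℕ} (β : ℝ) (δ c : Fin n → ℝ) : ℝ :=
  1 / (1 + β * ∑ i, tau β δ c i)

/-- Equilibrium spot emission allowances: if `P = γ̂ − β Σ_i (q_i + q_i^F)` and
`q_i = τ_i (P − b_i − c_i q_i^F − η_i P^{CO2})` for every `i`, and the spot emission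
trading of generator `i` is `ε_i^S = η_i Σ_k (q_k + q_k^F) − ε_i^F`, then for every `i`,
`ε_i^S = η_i Σ_k q_k^F + η_i Σ_k τ_k φ [ γ̂ + β Σ_l τ_l (b_l + c_l q_l^F + η_l P^{CO2}) ]
        − η_i (Σ_k τ_k) φ β Σ_k q_k^F − η_i Σ_k τ_k (b_k + c_k q_k^F + η_k P^{CO2}) − ε_i^F`. -/
theorem stmt_3 {n : ℕ} (β γhat PCO2 P : ℝ) (qF εF b c η δ q εS : Fin n → ℝ)
    (hβ : 0 < β) (hc : ∀ i, 0 ≤ c i)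
    (hpos : ∀ i, 0 < β * (1 + δ i) + c i)
    (hdemand : P = γhat - β * ∑ i, (q i + qF i))
    (hfoc : ∀ i, q i = tau β δ c i * (P - b i - c i * qF i - η i * PCO2))
    (hεS : ∀ i, εS i = η i * (∑ k, (q k + qF k)) - εF i) :
    ∀ i, εS i =
      η i * ∑ k, qF k
      + η i * (∑ k, tau β δ c k) * phi β δ c *
          (γhat + β * ∑ l, tau β δ c l * (b l + c l * qF l + η l * PCO2))
      - η i * (∑ k, tau β δ c k) * phi β δ c * β * ∑ k, qF k
      - η i * ∑ k, tau β δ c k * (b k + c k * qF k + η k * PCO2)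
      - εF i := by
  intro i
  set T := ∑ k, tau β δ c k with hTdef
  set A := ∑ k, tau β δ c k * (b k + c k * qF k + η k * PCO2) with hAdef
  set S := ∑ k, q k with hSdef
  set F := ∑ k, qF k with hFdef
  have hτpos : ∀ k, 0 < tau β δ c k := fun k => by
    unfold tau; exact one_div_pos.mpr (hpos k)
  have hTpos : 0 < 1 + β * T := by
    have : 0 ≤ T := Finset.sum_nonneg fun k _ => (hτpos k).le
    nlinarith
  have hTne : (1 + β * T) ≠ 0 := ne_of_gt hTpos
  -- sum of FOCs: S = T * P - A
  have hsum : S = T * P - A := by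
    rw [hSdef, hTdef, hAdef, Finset.sum_mul, ← Finset.sum_sub_distrib]
    exact Finset.sum_congr rfl fun k _ => by rw [hfoc k]; ring
  have hsplit : (∑ k, (q k + qF k)) = S + F := by
    rw [hSdef, hFdef, Finset.sum_add_distrib]
  rw [hdemand, hsplit] at hsum
  -- solve for S
  have hS : S = (T * γhat - T * β * F - A) / (1 + β * T) := by
    rw [eq_div_iff hTne]
    nlinarith [hsum]
  rw [hεS i, hsplit, hS, phi, ← hTdef]
  field_simp [show (1 + T * β) ≠ 0 by rw [mul_comm]; exact hTne]
  ring
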